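/- Let b and s be integers with 2 ≤ b < s, and define M̂(x) = ((1+x)^s − 1)/b for x ≥ 0. Then: (a) for every λ > 0 there is a constant C > 0 such that for all n ∈ ℕ and all 0 ≤ x ≤ λ, the derivative of the function x ↦ M̂^n(x·(b/s)^n) is at most C; (b) for all x ≥ 0 and all n ∈ ℕ, the derivative of x ↦ M̂^n(x·(b/s)^n) is at most (s/b)·exp{ ((s−1)/(1−b/s))·M̂^n(x·(b/s)^n) }. -/

import Mathlib

open Filter Real Finset

noncomputable def Mf (b s : ℕ) (x : ℝ) : ℝ := ((1 + x) ^ s - 1) / b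

lemma Mf_nonneg {b s : ℕ} {x : ℝ} (hx : 0 ≤ x) : 0 ≤ Mf b s x := by
  unfold Mf
  have h1 : (1:ℝ) ≤ (1 + x) ^ s := one_le_pow₀ (by linarith : (1:ℝ) ≤ 1 + x)
  have hb0 : (0:ℝ) ≤ (b:ℝ) := Nat.cast_nonneg b
  apply div_nonneg (by linarith) hb0

lemma Mf_mono {b s : ℕ} {x y : ℝ} (hx : 0 ≤ x) (hxy : x ≤ y) : Mf b s x ≤ Mf b s y := by
  unfold Mf
  have h : (1 + x) ^ s ≤ (1 + y) ^ s := by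
    apply pow_le_pow_left₀ (by linarith) (by linarith)
  have hb0 : (0:ℝ) ≤ (b:ℝ) := Nat.cast_nonneg b
  gcongr

lemma Mf_lb {b s : ℕ} (hb : 2 ≤ b) (hbs : b < s) {x : ℝ} (hx : 0 ≤ x) :
    (s:ℝ)/b * x ≤ Mf b s x := by
  have hbR : (0:ℝ) < b := by exact_mod_cast Nat.lt_of_lt_of_le Nat.zero_lt_two hb
  have h : 1 + (s:ℝ) * x ≤ (1 + x) ^ s := by
    have := one_add_mul_le_pow (a := x) (by linarith) s
    linarith
  unfold Mf
  rw [div_mul_eq_mul_div, div_le_div_iff₀ hbR hbR]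
  nlinarith [Nat.cast_nonneg (α := ℝ) s]

lemma pow_aux (m : ℕ) (x : ℝ) (hx : 0 ≤ x) :
    (1+x)^(m+1) - 1 ≤ (m+1) * x * (1+x)^m := by
  induction m with
  | zero => simp
  | succ m ih =>
    have h1 : (1:ℝ) ≤ (1+x)^(m+1) := one_le_pow₀ (by linarith : (1:ℝ) ≤ 1 + x)
    have key : (1+x)^(m+2) - 1 = (1+x) * ((1+x)^(m+1) - 1) + x := by ring
    have h2 : (1+x) * ((1+x)^(m+1) - 1) ≤ (1+x) * ((m+1) * x * (1+x)^m) := by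
      apply mul_le_mul_of_nonneg_left ih (by linarith)
    have h3 : (1+x) * ((m+1) * x * (1+x)^m) = (m+1) * x * (1+x)^(m+1) := by ring
    have h4 : x ≤ x * (1+x)^(m+1) := le_mul_of_one_le_right hx h1
    push_cast
    nlinarith

lemma Mf_ub {b s : ℕ} (hb : 2 ≤ b) (hbs : b < s) {x : ℝ} (hx : 0 ≤ x) :
    Mf b s x ≤ (s:ℝ)/b * x * Real.exp (((s:ℝ)-1)*x) := by
  have hbR : (0:ℝ) < b := by exact_mod_cast Nat.lt_of_lt_of_le Nat.zero_lt_two hb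
  have hs1 : 1 ≤ s := le_of_lt (Nat.lt_of_le_of_lt (by omega) hbs)
  obtain ⟨m, hm⟩ : ∃ m, s = m + 1 := ⟨s - 1, by omega⟩
  have h1 : (1+x)^s - 1 ≤ (s:ℝ) * x * (1+x)^(s-1) := by
    subst hm; simpa using pow_aux m x hx
  have h2 : (1+x)^(s-1) ≤ Real.exp (((s:ℝ)-1)*x) := by
    have hxe : (1+x) ≤ Real.exp x := by
      have := Real.add_one_le_exp x
      linarith
    calc (1+x)^(s-1) ≤ (Real.exp x)^(s-1) := by apply pow_le_pow_left₀ (by linarith) hxe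
      _ = Real.exp (((s-1:ℕ):ℝ) * x) := by rw [← Real.exp_nat_mul]
      _ = Real.exp (((s:ℝ)-1)*x) := by rw [Nat.cast_sub hs1]; norm_num
  unfold Mf
  rw [div_le_iff₀ hbR]
  have hsx : (0:ℝ) ≤ (s:ℝ) * x := by positivity
  calc (1+x)^s - 1 ≤ (s:ℝ) * x * (1+x)^(s-1) := h1
    _ ≤ (s:ℝ) * x * Real.exp (((s:ℝ)-1)*x) := by apply mul_le_mul_of_nonneg_left h2 hsx
    _ = (s:ℝ)/b * x * Real.exp (((s:ℝ)-1)*x) * b := by field_simp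

section B
variable {b s : ℕ}

lemma iter_nonneg (k : ℕ) {x : ℝ} (hx : 0 ≤ x) : 0 ≤ (Mf b s)^[k] x := by
  induction k generalizing x with
  | zero => simpa
  | succ k ih =>
    rw [Function.iterate_succ_apply]
    exact ih (Mf_nonneg hx)

lemma iter_mono (k : ℕ) {x y : ℝ} (hx : 0 ≤ x) (hxy : x ≤ y) :
    (Mf b s)^[k] x ≤ (Mf b s)^[k] y := by
  induction k generalizing x y with
  | zero => simpa
  | succ k ih =>
    rw [Function.iterate_succ_apply, Function.iterate_succ_apply]
    exact ih (Mf_nonneg hx) (Mf_mono hx hxy)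

lemma iter_lb (hb : 2 ≤ b) (hbs : b < s) (k : ℕ) {x : ℝ} (hx : 0 ≤ x) :
    x * ((s:ℝ)/b)^k ≤ (Mf b s)^[k] x := by
  induction k with
  | zero => simpa
  | succ k ih =>
    rw [Function.iterate_succ_apply']
    have h1 : 0 ≤ (Mf b s)^[k] x := iter_nonneg k hx
    have hr : (0:ℝ) ≤ (s:ℝ)/b := by positivity
    calc x * ((s:ℝ)/b)^(k+1) = (x * ((s:ℝ)/b)^k) * ((s:ℝ)/b) := by ring
      _ ≤ (Mf b s)^[k] x * ((s:ℝ)/b) := by apply mul_le_mul_of_nonneg_right ih hr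
      _ = (s:ℝ)/b * (Mf b s)^[k] x := by ring
      _ ≤ Mf b s ((Mf b s)^[k] x) := Mf_lb hb hbs h1

lemma le_iter (hb : 2 ≤ b) (hbs : b < s) (k : ℕ) {x : ℝ} (hx : 0 ≤ x) :
    x ≤ (Mf b s)^[k] x := by
  have hr : (1:ℝ) ≤ (s:ℝ)/b := by
    have hbR : (0:ℝ) < b := by exact_mod_cast Nat.lt_of_lt_of_le Nat.zero_lt_two hb
    rw [le_div_iff₀ hbR]
    simp only [one_mul]
    exact_mod_cast hbs.le
  calc x = x * 1 := by ring
    _ ≤ x * ((s:ℝ)/b)^k := by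
        apply mul_le_mul_of_nonneg_left (one_le_pow₀ hr) hx
    _ ≤ (Mf b s)^[k] x := iter_lb hb hbs k hx

lemma Mf_hasDerivAt (x : ℝ) :
    HasDerivAt (Mf b s) ((s:ℝ) * (1+x)^(s-1) / b) x := by
  have h1 : HasDerivAt (fun y : ℝ => 1 + y) 1 x := (hasDerivAt_id x).const_add 1
  have h2 : HasDerivAt (fun y : ℝ => (1+y)^s) ((s:ℝ) * (1+x)^(s-1) * 1) x := h1.pow s
  have h3 := (h2.sub_const 1).div_const (b:ℝ)
  simp only [mul_one] at h3
  exact h3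

lemma iterate_hasDerivAt (n : ℕ) (t x : ℝ) :
    HasDerivAt (fun y : ℝ => (Mf b s)^[n] (y * t))
      (t * ∏ k ∈ Finset.range n, ((s:ℝ) * (1 + (Mf b s)^[k] (x*t))^(s-1) / b)) x := by
  induction n with
  | zero =>
    simpa using (hasDerivAt_mul_const t (x := x))
  | succ n ih =>
    have hz := Mf_hasDerivAt (b := b) (s := s) ((Mf b s)^[n] (x*t))
    have hcomp := HasDerivAt.comp x hz ih
    simp only [Function.iterate_succ_apply']
    refine hcomp.congr_deriv ?_
    rw [Finset.prod_range_succ]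
    ring
end B
section C
variable {b s : ℕ}

lemma sum_iter_le (hb : 2 ≤ b) (hbs : b < s) (n : ℕ) {w : ℝ} (hw : 0 ≤ w) :
    ∑ k ∈ Finset.range n, (Mf b s)^[k] w ≤ (Mf b s)^[n] w / (1 - (b:ℝ)/s) := by
  have hbR : (0:ℝ) < b := by exact_mod_cast Nat.lt_of_lt_of_le Nat.zero_lt_two hb
  have hsR : (0:ℝ) < s := lt_trans hbR (by exact_mod_cast hbs)
  set q : ℝ := (b:ℝ)/s with hqdef
  have hq0 : 0 < q := by positivity
  have hq1 : q < 1 := by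
    rw [hqdef, div_lt_one hsR]; exact_mod_cast hbs
  have hzn : 0 ≤ (Mf b s)^[n] w := iter_nonneg n hw
  have key : ∀ k ∈ Finset.range n, (Mf b s)^[k] w ≤ (Mf b s)^[n] w * q^(n-k) := by
    intro k hk
    rw [Finset.mem_range] at hk
    have hzk : 0 ≤ (Mf b s)^[k] w := iter_nonneg k hw
    have h1 : (Mf b s)^[k] w * ((s:ℝ)/b)^(n-k) ≤ (Mf b s)^[n] w := by
      have := iter_lb hb hbs (n-k) hzk
      calc (Mf b s)^[k] w * ((s:ℝ)/b)^(n-k) ≤ (Mf b s)^[n-k] ((Mf b s)^[k] w) := this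
        _ = (Mf b s)^[n] w := by
            rw [← Function.iterate_add_apply]
            congr 1
            omega
    have hrq : ((s:ℝ)/b)^(n-k) * q^(n-k) = 1 := by
      rw [← mul_pow]
      rw [hqdef]
      field_simp
      exact one_pow _
    have hrpos : (0:ℝ) < ((s:ℝ)/b)^(n-k) := by positivity
    nlinarith [pow_pos hq0 (n-k)]
  calc ∑ k ∈ Finset.range n, (Mf b s)^[k] w
      ≤ ∑ k ∈ Finset.range n, (Mf b s)^[n] w * q^(n-k) := Finset.sum_le_sum key
    _ = (Mf b s)^[n] w * ∑ k ∈ Finset.range n, q^(n-k) := by rw [Finset.mul_sum]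
    _ ≤ (Mf b s)^[n] w / (1 - q) := by
        have hsum : ∑ k ∈ Finset.range n, q^(n-k) ≤ 1/(1-q) := by
          have h1 : ∑ k ∈ Finset.range n, q^(n-k) = ∑ j ∈ Finset.range n, q^(j+1) := by
            rw [← Finset.sum_range_reflect]
            apply Finset.sum_congr rfl
            intro j hj
            rw [Finset.mem_range] at hj
            congr 1
            omega
          have h2 : ∑ j ∈ Finset.range n, q^(j+1) = q * ∑ j ∈ Finset.range n, q^j := by
            rw [Finset.mul_sum]
            apply Finset.sum_congr rfl
            intro j _
            ring
          have h3 : ∑ j ∈ Finset.range n, q^j ≤ 1/(1-q) := by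
            rw [geom_sum_eq (ne_of_lt hq1) n]
            have hqn : 0 < q^n := pow_pos hq0 n
            have heq : (q ^ n - 1) / (q - 1) = (1 - q^n)/(1-q) := by
              rw [div_eq_div_iff (by linarith) (by linarith)]
              ring
            rw [heq]
            gcongr
            · linarith
          rw [h1, h2]
          have : q * ∑ j ∈ Finset.range n, q^j ≤ q * (1/(1-q)) := by
            apply mul_le_mul_of_nonneg_left h3 hq0.le
          calc q * ∑ j ∈ Finset.range n, q^j ≤ q * (1/(1-q)) := this
            _ ≤ 1/(1-q) := by
                have h1q : (0:ℝ) < 1 - q := by linarith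
                have h2q : (0:ℝ) ≤ 1/(1-q) := by positivity
                exact mul_le_of_le_one_left h2q hq1.le

        calc (Mf b s)^[n] w * ∑ k ∈ Finset.range n, q^(n-k)
            ≤ (Mf b s)^[n] w * (1/(1-q)) := mul_le_mul_of_nonneg_left hsum hzn
          _ = (Mf b s)^[n] w / (1-q) := by ring
end C
section D
variable {b s : ℕ}

lemma one_add_pow_le_exp {s : ℕ} (hs1 : 1 ≤ s) {z : ℝ} (hz : 0 ≤ z) :
    (1+z)^(s-1) ≤ Real.exp (((s:ℝ)-1)*z) := by
  have hxe : (1+z) ≤ Real.exp z := by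
    have := Real.add_one_le_exp z
    linarith
  calc (1+z)^(s-1) ≤ (Real.exp z)^(s-1) := by
        apply pow_le_pow_left₀ (by linarith) hxe
    _ = Real.exp (((s-1:ℕ):ℝ) * z) := by rw [← Real.exp_nat_mul]
    _ = Real.exp (((s:ℝ)-1)*z) := by rw [Nat.cast_sub hs1]; norm_num

lemma partb (hb : 2 ≤ b) (hbs : b < s) (n : ℕ) (x : ℝ) (hx : 0 ≤ x) :
    deriv (fun y : ℝ => (Mf b s)^[n] (y * ((b : ℝ) / s) ^ n)) x
      ≤ ((s : ℝ) / b) *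
        Real.exp ((((s : ℝ) - 1) / (1 - (b : ℝ) / s)) *
          (Mf b s)^[n] (x * ((b : ℝ) / s) ^ n)) := by
  have hbR : (0:ℝ) < b := by exact_mod_cast Nat.lt_of_lt_of_le Nat.zero_lt_two hb
  have hsR : (0:ℝ) < s := lt_trans hbR (by exact_mod_cast hbs)
  have hs1 : 1 ≤ s := le_of_lt (Nat.lt_of_le_of_lt (by omega) hbs)
  set q : ℝ := (b:ℝ)/s with hqdef
  have hq0 : 0 < q := by positivity
  have hq1 : q < 1 := by rw [hqdef, div_lt_one hsR]; exact_mod_cast hbs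
  set t : ℝ := q ^ n with htdef
  have ht0 : 0 < t := pow_pos hq0 n
  have hw : 0 ≤ x * t := by positivity
  have hderiv := (iterate_hasDerivAt (b := b) (s := s) n t x).deriv
  rw [hderiv]
  set z : ℕ → ℝ := fun k => (Mf b s)^[k] (x * t) with hzdef
  have hz0 : ∀ k, 0 ≤ z k := fun k => iter_nonneg k hw
  have step1 : t * ∏ k ∈ Finset.range n, ((s:ℝ) * (1 + z k)^(s-1) / b)
      = ∏ k ∈ Finset.range n, (1 + z k)^(s-1) := by
    have e1 : ∏ k ∈ Finset.range n, ((s:ℝ) * (1 + z k)^(s-1) / b)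
        = ∏ k ∈ Finset.range n, (((s:ℝ)/b) * (1 + z k)^(s-1)) := by
      apply Finset.prod_congr rfl
      intro k _
      ring
    rw [e1, Finset.prod_mul_distrib, Finset.prod_const]
    have : t * ((s:ℝ)/b)^n = 1 := by
      rw [htdef, hqdef, ← mul_pow]
      field_simp
      exact one_pow _
    rw [Finset.card_range, ← mul_assoc, this, one_mul]
  rw [step1]
  have step2 : ∏ k ∈ Finset.range n, (1 + z k)^(s-1)
      ≤ ∏ k ∈ Finset.range n, Real.exp (((s:ℝ)-1) * z k) := by
    apply Finset.prod_le_prod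
    · intro k _
      have := hz0 k
      positivity
    · intro k _
      exact one_add_pow_le_exp hs1 (hz0 k)
  have step3 : ∏ k ∈ Finset.range n, Real.exp (((s:ℝ)-1) * z k)
      = Real.exp (((s:ℝ)-1) * ∑ k ∈ Finset.range n, z k) := by
    rw [← Real.exp_sum, Finset.mul_sum]
  have step4 : ((s:ℝ)-1) * ∑ k ∈ Finset.range n, z k
      ≤ (((s:ℝ)-1)/(1-q)) * z n := by
    have hsum := sum_iter_le hb hbs n hw
    have hs1R : (0:ℝ) ≤ (s:ℝ) - 1 := by
      have : (1:ℝ) ≤ (s:ℝ) := by exact_mod_cast hs1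
      linarith
    calc ((s:ℝ)-1) * ∑ k ∈ Finset.range n, z k
        ≤ ((s:ℝ)-1) * (z n / (1-q)) := mul_le_mul_of_nonneg_left hsum hs1R
      _ = (((s:ℝ)-1)/(1-q)) * z n := by ring
  have hsb1 : (1:ℝ) ≤ (s:ℝ)/b := by
    rw [le_div_iff₀ hbR, one_mul]
    exact_mod_cast hbs.le
  calc ∏ k ∈ Finset.range n, (1 + z k)^(s-1)
      ≤ Real.exp (((s:ℝ)-1) * ∑ k ∈ Finset.range n, z k) := by rw [← step3]; exact step2
    _ ≤ Real.exp ((((s:ℝ)-1)/(1-q)) * z n) := Real.exp_le_exp.mpr step4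
    _ ≤ ((s:ℝ)/b) * Real.exp ((((s:ℝ)-1)/(1-q)) * z n) := by
        nlinarith [Real.exp_pos ((((s:ℝ)-1)/(1-q)) * z n)]
end D
section E
variable {b s : ℕ}

lemma small (hb : 2 ≤ b) (hbs : b < s) {t : ℝ} (ht0 : 0 ≤ t)
    (htd : (((s:ℝ)-1) * Real.exp 1) * t ≤ (s:ℝ)/b - 1) (n : ℕ) :
    ∀ k, k ≤ n →
      (Mf b s)^[k] (t * ((b:ℝ)/s)^n)
          ≤ t * ((b:ℝ)/s)^(n-k) *
            Real.exp (((s:ℝ)-1) * ∑ j ∈ Finset.range k, (Mf b s)^[j] (t * ((b:ℝ)/s)^n))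
      ∧ (∑ j ∈ Finset.range k, (Mf b s)^[j] (t * ((b:ℝ)/s)^n)) * ((s:ℝ)/b - 1)
          ≤ Real.exp 1 * t * ((b:ℝ)/s)^(n-k) := by
  have hbR : (0:ℝ) < b := by exact_mod_cast Nat.lt_of_lt_of_le Nat.zero_lt_two hb
  have hsR : (0:ℝ) < s := lt_trans hbR (by exact_mod_cast hbs)
  have hs1 : 1 ≤ s := le_of_lt (Nat.lt_of_le_of_lt (by omega) hbs)
  set q : ℝ := (b:ℝ)/s with hqdef
  set r : ℝ := (s:ℝ)/b with hrdef
  set c : ℝ := (s:ℝ)-1 with hcdef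
  set E : ℝ := Real.exp 1 with hEdef
  have hq0 : 0 < q := by positivity
  have hq1 : q < 1 := by rw [hqdef, div_lt_one hsR]; exact_mod_cast hbs
  have hr1 : 1 < r := by
    rw [hrdef, lt_div_iff₀ hbR, one_mul]; exact_mod_cast hbs
  have hc0 : 0 ≤ c := by
    have : (1:ℝ) ≤ (s:ℝ) := by exact_mod_cast hs1
    rw [hcdef]; linarith
  have hE0 : 0 < E := Real.exp_pos 1
  have hrq : r * q = 1 := by rw [hrdef, hqdef]; field_simp
  set w : ℝ := t * q^n with hwdef
  have hw0 : 0 ≤ w := by positivity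
  set z : ℕ → ℝ := fun j => (Mf b s)^[j] w with hzdef
  have hz0 : ∀ j, 0 ≤ z j := fun j => iter_nonneg j hw0
  set Sm : ℕ → ℝ := fun k => ∑ j ∈ Finset.range k, z j with hSdef
  have hS0 : ∀ k, 0 ≤ Sm k := fun k => Finset.sum_nonneg (fun j _ => hz0 j)
  intro k
  induction k with
  | zero =>
    intro _
    constructor
    · show z 0 ≤ t * q^(n-0) * Real.exp (c * Sm 0)
      have : Sm 0 = 0 := by simp [hSdef]
      rw [this, mul_zero, Real.exp_zero, mul_one]
      show (Mf b s)^[0] w ≤ t * q^(n-0)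
      simp [hwdef]
    · show Sm 0 * (r - 1) ≤ E * t * q^(n-0)
      have : Sm 0 = 0 := by simp [hSdef]
      rw [this, zero_mul]
      positivity
  | succ k ih =>
    intro hk1
    have hk : k ≤ n := by omega
    obtain ⟨h1, h2⟩ := ih hk
    have hqnk1 : q^(n-k) ≤ 1 := pow_le_one₀ hq0.le hq1.le
    have hqnk0 : (0:ℝ) ≤ q^(n-k) := by positivity
    -- c * Sm k ≤ 1
    have hcS : c * Sm k ≤ 1 := by
      have e1 : Sm k * (r-1) ≤ E * t := by
        have : E * t * q^(n-k) ≤ E * t * 1 := by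
          apply mul_le_mul_of_nonneg_left hqnk1 (by positivity)
        rw [mul_one] at this
        linarith
      have e2 : c * Sm k * (r-1) ≤ c * (E * t) := by
        calc c * Sm k * (r-1) = c * (Sm k * (r-1)) := by ring
          _ ≤ c * (E * t) := mul_le_mul_of_nonneg_left e1 hc0
      have e3 : c * (E * t) ≤ r - 1 := by
        calc c * (E * t) = (c * E) * t := by ring
          _ ≤ r - 1 := htd
      have hr1' : 0 < r - 1 := by linarith
      nlinarith [hS0 k]
    have hzkE : z k ≤ E * t * q^(n-k) := by
      have : Real.exp (c * Sm k) ≤ E := by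
        rw [hEdef]
        exact Real.exp_le_exp.mpr hcS
      calc z k ≤ t * q^(n-k) * Real.exp (c * Sm k) := h1
        _ ≤ t * q^(n-k) * E := mul_le_mul_of_nonneg_left this (by positivity)
        _ = E * t * q^(n-k) := by ring
    have hnk : n - k = (n - (k+1)) + 1 := by omega
    have hqq : q^(n-k) = q^(n-(k+1)) * q := by rw [hnk, pow_succ]
    have hSucc : Sm (k+1) = Sm k + z k := Finset.sum_range_succ z k
    constructor
    · show z (k+1) ≤ t * q^(n-(k+1)) * Real.exp (c * Sm (k+1))
      have hz1 : z (k+1) = Mf b s (z k) := by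
        rw [hzdef]
        exact Function.iterate_succ_apply' (Mf b s) k w
      have hub : Mf b s (z k) ≤ r * z k * Real.exp (c * z k) := Mf_ub hb hbs (hz0 k)
      have hmul : r * z k * Real.exp (c * z k)
          ≤ r * (t * q^(n-k) * Real.exp (c * Sm k)) * Real.exp (c * z k) := by
        have hpos : (0:ℝ) ≤ r * Real.exp (c * z k) := by positivity
        nlinarith [Real.exp_pos (c * z k), h1, mul_le_mul_of_nonneg_left h1 hpos]
      have heq : r * (t * q^(n-k) * Real.exp (c * Sm k)) * Real.exp (c * z k)
          = t * q^(n-(k+1)) * Real.exp (c * Sm (k+1)) := by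
        rw [hSucc, hqq, mul_add, Real.exp_add]
        calc r * (t * (q^(n-(k+1)) * q) * Real.exp (c * Sm k)) * Real.exp (c * z k)
            = (r*q) * (t * q^(n-(k+1)) * (Real.exp (c * Sm k) * Real.exp (c * z k))) := by ring
          _ = t * q^(n-(k+1)) * (Real.exp (c * Sm k) * Real.exp (c * z k)) := by
              rw [hrq, one_mul]
      rw [hz1]
      calc Mf b s (z k) ≤ r * z k * Real.exp (c * z k) := hub
        _ ≤ r * (t * q^(n-k) * Real.exp (c * Sm k)) * Real.exp (c * z k) := hmul
        _ = t * q^(n-(k+1)) * Real.exp (c * Sm (k+1)) := heq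
    · show Sm (k+1) * (r - 1) ≤ E * t * q^(n-(k+1))
      have hzr : z k * (r-1) ≤ E * t * q^(n-k) * (r-1) := by
        apply mul_le_mul_of_nonneg_right hzkE (by linarith)
      have : Sm (k+1) * (r-1) = Sm k * (r-1) + z k * (r-1) := by rw [hSucc]; ring
      rw [this]
      have hfin : E * t * q^(n-k) + E * t * q^(n-k) * (r-1) = E * t * q^(n-(k+1)) := by
        rw [hqq]
        linear_combination (E * t * q^(n-(k+1))) * hrq
      linarith
end E
section F
variable {b s : ℕ}

lemma small_final (hb : 2 ≤ b) (hbs : b < s) {t : ℝ} (ht0 : 0 ≤ t)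
    (htd : (((s:ℝ)-1) * Real.exp 1) * t ≤ (s:ℝ)/b - 1) (n : ℕ) :
    (Mf b s)^[n] (t * ((b:ℝ)/s)^n) ≤ Real.exp 1 * t := by
  obtain ⟨h1, h2⟩ := small hb hbs ht0 htd n n le_rfl
  have hbR : (0:ℝ) < b := by exact_mod_cast Nat.lt_of_lt_of_le Nat.zero_lt_two hb
  have hsR : (0:ℝ) < s := lt_trans hbR (by exact_mod_cast hbs)
  have hs1 : 1 ≤ s := le_of_lt (Nat.lt_of_le_of_lt (by omega) hbs)
  have hc0 : (0:ℝ) ≤ (s:ℝ) - 1 := by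
    have : (1:ℝ) ≤ (s:ℝ) := by exact_mod_cast hs1
    linarith
  have hr1 : 1 < (s:ℝ)/b := by
    rw [lt_div_iff₀ hbR, one_mul]; exact_mod_cast hbs
  have hE0 : (0:ℝ) < Real.exp 1 := Real.exp_pos 1
  simp only [Nat.sub_self, pow_zero, mul_one] at h1 h2
  set Sn : ℝ := ∑ j ∈ Finset.range n, (Mf b s)^[j] (t * ((b:ℝ)/s)^n) with hSdef
  have hSn0 : 0 ≤ Sn := Finset.sum_nonneg fun j _ => iter_nonneg j (by positivity)
  have hcS : ((s:ℝ)-1) * Sn ≤ 1 := by nlinarith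
  calc (Mf b s)^[n] (t * ((b:ℝ)/s)^n) ≤ t * Real.exp (((s:ℝ)-1) * Sn) := h1
    _ ≤ t * Real.exp 1 := by
        apply mul_le_mul_of_nonneg_left (Real.exp_le_exp.mpr hcS) ht0
    _ = Real.exp 1 * t := by ring

lemma bounded (hb : 2 ≤ b) (hbs : b < s) {lam : ℝ} (hlam : 0 < lam) :
    ∃ Z : ℝ, ∀ n : ℕ, ∀ x : ℝ, 0 ≤ x → x ≤ lam →
      (Mf b s)^[n] (x * ((b:ℝ)/s)^n) ≤ Z := by
  have hbR : (0:ℝ) < b := by exact_mod_cast Nat.lt_of_lt_of_le Nat.zero_lt_two hb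
  have hsR : (0:ℝ) < s := lt_trans hbR (by exact_mod_cast hbs)
  have hs1 : 1 ≤ s := le_of_lt (Nat.lt_of_le_of_lt (by omega) hbs)
  set q : ℝ := (b:ℝ)/s with hqdef
  have hq0 : 0 < q := by positivity
  have hq1 : q < 1 := by rw [hqdef, div_lt_one hsR]; exact_mod_cast hbs
  have hr1 : 1 < (s:ℝ)/b := by rw [lt_div_iff₀ hbR, one_mul]; exact_mod_cast hbs
  have hc0 : (0:ℝ) < (s:ℝ) - 1 := by
    have h3 : 3 ≤ s := by omega
    have : (3:ℝ) ≤ (s:ℝ) := by exact_mod_cast h3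
    linarith
  have hE0 : (0:ℝ) < Real.exp 1 := Real.exp_pos 1
  set δ : ℝ := ((s:ℝ)/b - 1) / (((s:ℝ)-1) * Real.exp 1) with hddef
  have hd0 : 0 < δ := by
    apply div_pos (by linarith) (by positivity)
  obtain ⟨m, hm⟩ := exists_pow_lt_of_lt_one (show (0:ℝ) < δ/lam by positivity) hq1
  refine ⟨(Mf b s)^[m] (lam + Real.exp 1 * δ), ?_⟩
  intro n x hx hxl
  have hqn0 : (0:ℝ) ≤ q^n := by positivity
  have h0 : (Mf b s)^[n] (x * q^n) ≤ (Mf b s)^[n] (lam * q^n) :=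
    iter_mono n (by positivity) (mul_le_mul_of_nonneg_right hxl hqn0)
  have hEd0 : (0:ℝ) ≤ Real.exp 1 * δ := by positivity
  rcases le_or_gt n m with h | h
  · -- n ≤ m
    have e1 : (Mf b s)^[n] (lam * q^n) ≤ (Mf b s)^[n] lam := by
      apply iter_mono n (by positivity)
      calc lam * q^n ≤ lam * 1 := by
            apply mul_le_mul_of_nonneg_left (pow_le_one₀ hq0.le hq1.le) hlam.le
        _ = lam := mul_one lam
    have e2 : (Mf b s)^[n] lam ≤ (Mf b s)^[m] lam := by
      have : (Mf b s)^[m] lam = (Mf b s)^[m - n] ((Mf b s)^[n] lam) := by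
        rw [← Function.iterate_add_apply]
        congr 1
        omega
      rw [this]
      exact le_iter hb hbs (m-n) (iter_nonneg n hlam.le)
    have e3 : (Mf b s)^[m] lam ≤ (Mf b s)^[m] (lam + Real.exp 1 * δ) :=
      iter_mono m hlam.le (by linarith)
    linarith
  · -- m < n
    set t' : ℝ := lam * q^m with ht'def
    have ht'0 : 0 ≤ t' := by positivity
    have ht'd : t' < δ := by
      rw [ht'def]
      calc lam * q^m < lam * (δ/lam) := by
            apply mul_lt_mul_of_pos_left hm hlam
        _ = δ := by field_simp
    have htd : (((s:ℝ)-1) * Real.exp 1) * t' ≤ (s:ℝ)/b - 1 := by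
      have hpos : (0:ℝ) < ((s:ℝ)-1) * Real.exp 1 := by positivity
      have := mul_le_mul_of_nonneg_left ht'd.le hpos.le
      calc (((s:ℝ)-1) * Real.exp 1) * t' ≤ (((s:ℝ)-1) * Real.exp 1) * δ := this
        _ = (s:ℝ)/b - 1 := by
            rw [hddef]
            field_simp
    have hsplit : (Mf b s)^[n] (lam * q^n) = (Mf b s)^[m] ((Mf b s)^[n-m] (t' * q^(n-m))) := by
      rw [← Function.iterate_add_apply]
      have harg : lam * q^n = t' * q^(n-m) := by
        rw [ht'def]
        rw [mul_assoc, ← pow_add]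
        congr 2
        omega
      rw [harg]
      congr 1
      omega
    have hinner : (Mf b s)^[n-m] (t' * q^(n-m)) ≤ Real.exp 1 * t' :=
      small_final hb hbs ht'0 htd (n-m)
    have hin2 : (Mf b s)^[m] ((Mf b s)^[n-m] (t' * q^(n-m)))
        ≤ (Mf b s)^[m] (lam + Real.exp 1 * δ) := by
      apply iter_mono m (iter_nonneg (n-m) (by positivity))
      have : Real.exp 1 * t' ≤ Real.exp 1 * δ :=
        mul_le_mul_of_nonneg_left ht'd.le hE0.le
      linarith
    rw [hsplit] at h0
    linarith
end F

/-- For `2 ≤ b < s` and `M̂(x) = ((1+x)^s − 1)/b`: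
(a) for every `λ > 0` there is `C > 0` bounding the derivative of
`x ↦ M̂^[n](x·(b/s)^n)` on `[0, λ]`, uniformly in `n`;
(b) for all `x ≥ 0` and all `n`, this derivative is at most
`(s/b)·exp(((s−1)/(1−b/s))·M̂^[n](x·(b/s)^n))`. -/
theorem stmt8 (b s : ℕ) (hb : 2 ≤ b) (hbs : b < s)
    (Mhat : ℝ → ℝ) (hMhat : ∀ x : ℝ, Mhat x = ((1 + x) ^ s - 1) / b) :
    (∀ lam : ℝ, 0 < lam → ∃ C : ℝ, 0 < C ∧
      ∀ n : ℕ, ∀ x : ℝ, 0 ≤ x → x ≤ lam →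
        deriv (fun y : ℝ => Mhat^[n] (y * ((b : ℝ) / s) ^ n)) x ≤ C) ∧
    (∀ n : ℕ, ∀ x : ℝ, 0 ≤ x →
      deriv (fun y : ℝ => Mhat^[n] (y * ((b : ℝ) / s) ^ n)) x
        ≤ ((s : ℝ) / b) *
          Real.exp ((((s : ℝ) - 1) / (1 - (b : ℝ) / s)) *
            Mhat^[n] (x * ((b : ℝ) / s) ^ n))) := by
  have hM : Mhat = Mf b s := funext fun x => hMhat x
  subst hM
  have hbR : (0:ℝ) < b := by exact_mod_cast Nat.lt_of_lt_of_le Nat.zero_lt_two hb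
  have hsR : (0:ℝ) < s := lt_trans hbR (by exact_mod_cast hbs)
  have hq1 : (b:ℝ)/s < 1 := by rw [div_lt_one hsR]; exact_mod_cast hbs
  have hc0 : (0:ℝ) ≤ (s:ℝ) - 1 := by
    have h3 : 1 ≤ s := by omega
    have : (1:ℝ) ≤ (s:ℝ) := by exact_mod_cast h3
    linarith
  have hK0 : (0:ℝ) ≤ ((s:ℝ)-1)/(1-(b:ℝ)/s) := by
    apply div_nonneg hc0 (by linarith)
  constructor
  · intro lam hlam
    obtain ⟨Z, hZ⟩ := bounded hb hbs hlam
    refine ⟨((s:ℝ)/b) * Real.exp ((((s:ℝ)-1)/(1-(b:ℝ)/s)) * Z), by positivity, ?_⟩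
    intro n x hx hxl
    calc deriv (fun y : ℝ => (Mf b s)^[n] (y * ((b : ℝ) / s) ^ n)) x
        ≤ ((s:ℝ)/b) * Real.exp ((((s:ℝ)-1)/(1-(b:ℝ)/s)) *
            (Mf b s)^[n] (x * ((b : ℝ) / s) ^ n)) := partb hb hbs n x hx
      _ ≤ ((s:ℝ)/b) * Real.exp ((((s:ℝ)-1)/(1-(b:ℝ)/s)) * Z) := by
          apply mul_le_mul_of_nonneg_left _ (by positivity)
          apply Real.exp_le_exp.mpr
          exact mul_le_mul_of_nonneg_left (hZ n x hx hxl) hK0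
  · intro n x hx
    exact partb hb hbs n x hx
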